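/- Let e ∈ ℚ ∖ {−1, 0, 1} and let a, b, c be positive reals with b ≠ c. Then there exists c₁ ∈ ℕ such that the sequence h(ℓ) = (e·b^ℓ + a^ℓ)/(c^ℓ + e·a^ℓ) is strictly monotone (increasing or decreasing) for ℓ ≥ c₁. In particular, the sequence is eventually injective. -/

import Mathlib

open Filter

lemma aux_small (B y C z X K : ℝ) (hX : 0 < X) (hy : 0 < y) (hz : 0 < z)
    (hyX : y < X) (hzX : z < X) (hK : K ≠ 0) :
    ∃ N : ℕ, ∀ ℓ, N ≤ ℓ → |B * y ^ ℓ + C * z ^ ℓ| < |K| * X ^ ℓ := by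
  have hy1 : Tendsto (fun ℓ : ℕ => (y / X) ^ ℓ) atTop (nhds 0) :=
    tendsto_pow_atTop_nhds_zero_of_lt_one (le_of_lt (div_pos hy hX)) ((div_lt_one hX).2 hyX)
  have hz1 : Tendsto (fun ℓ : ℕ => (z / X) ^ ℓ) atTop (nhds 0) :=
    tendsto_pow_atTop_nhds_zero_of_lt_one (le_of_lt (div_pos hz hX)) ((div_lt_one hX).2 hzX)
  have h1 : Tendsto (fun ℓ : ℕ => B * (y / X) ^ ℓ + C * (z / X) ^ ℓ) atTop (nhds 0) := by
    have := (hy1.const_mul B).add (hz1.const_mul C)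
    simpa using this
  have h2 : ∀ᶠ ℓ in atTop, |B * (y / X) ^ ℓ + C * (z / X) ^ ℓ| < |K| := by
    have habs : Tendsto (fun ℓ : ℕ => |B * (y / X) ^ ℓ + C * (z / X) ^ ℓ|) atTop (nhds 0) := by
      simpa using h1.abs
    exact habs.eventually_lt_const (abs_pos.2 hK)
  obtain ⟨N, hN⟩ := eventually_atTop.1 h2
  refine ⟨N, fun ℓ hℓ => ?_⟩
  have key : B * y ^ ℓ + C * z ^ ℓ = (B * (y / X) ^ ℓ + C * (z / X) ^ ℓ) * X ^ ℓ := by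
    rw [add_mul, mul_assoc, mul_assoc, ← mul_pow, ← mul_pow, div_mul_cancel₀ y hX.ne',
      div_mul_cancel₀ z hX.ne']
  rw [key, abs_mul, abs_pow, abs_of_pos hX]
  exact mul_lt_mul_of_pos_right (hN ℓ hℓ) (pow_pos hX ℓ)

lemma aux_sign (g : ℕ → ℝ) (K X B y C z : ℝ) (hX : 0 < X) (hy : 0 < y) (hz : 0 < z)
    (hyX : y < X) (hzX : z < X) (hK : K ≠ 0)
    (hg : ∀ ℓ, g ℓ = K * X ^ ℓ + B * y ^ ℓ + C * z ^ ℓ) :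
    ∃ N : ℕ, (∀ ℓ, N ≤ ℓ → 0 < g ℓ) ∨ (∀ ℓ, N ≤ ℓ → g ℓ < 0) := by
  obtain ⟨N, hN⟩ := aux_small B y C z X K hX hy hz hyX hzX hK
  refine ⟨N, ?_⟩
  rcases hK.lt_or_gt with h | h
  · right
    intro ℓ hℓ
    have h1 := (abs_lt.1 (hN ℓ hℓ)).2
    rw [abs_of_neg h] at h1
    rw [hg]; nlinarith [pow_pos hX ℓ]
  · left
    intro ℓ hℓ
    have h1 := (abs_lt.1 (hN ℓ hℓ)).1
    rw [abs_of_pos h] at h1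
    rw [hg]; nlinarith [pow_pos hX ℓ]

lemma chain {f : ℕ → ℝ} {N : ℕ} (h : ∀ ℓ, N ≤ ℓ → f ℓ < f (ℓ + 1)) :
    ∀ m n, N ≤ m → m < n → f m < f n := by
  intro m n hm hmn
  induction n, hmn using Nat.le_induction with
  | base => exact h m hm
  | succ n hn ih => exact ih.trans (h n (hm.trans (Nat.le_of_succ_le hn)))

lemma growth_den_sign (E a c : ℝ) (ha : 0 < a) (hc : 0 < c) (hE0 : E ≠ 0) (hEm1 : E ≠ -1) :
    ∃ N : ℕ, (∀ ℓ, N ≤ ℓ → 0 < c ^ ℓ + E * a ^ ℓ) ∨ (∀ ℓ, N ≤ ℓ → c ^ ℓ + E * a ^ ℓ < 0) := by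
  rcases lt_trichotomy a c with h | h | h
  · exact aux_sign _ 1 c E a 0 (c / 2) hc ha (by linarith) h (by linarith) one_ne_zero
      (fun ℓ => by ring)
  · subst h
    refine aux_sign _ (1 + E) a 0 (a / 2) 0 (a / 2) ha (by linarith) (by linarith) (by linarith)
      (by linarith) ?_ (fun ℓ => by ring)
    intro hcon; exact hEm1 (by linarith)
  · exact aux_sign _ E a 1 c 0 (a / 2) ha hc (by linarith) h (by linarith) hE0
      (fun ℓ => by ring)

lemma growth_num_sign (E a b c : ℝ) (ha : 0 < a) (hb : 0 < b) (hc : 0 < c) (hbc : b ≠ c)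
    (hE0 : E ≠ 0) (hEm1 : E ≠ -1) :
    ∃ N : ℕ,
      (∀ ℓ, N ≤ ℓ → 0 < E * (b - c) * (b * c) ^ ℓ + E ^ 2 * (b - a) * (a * b) ^ ℓ
          + (a - c) * (a * c) ^ ℓ) ∨
      (∀ ℓ, N ≤ ℓ → E * (b - c) * (b * c) ^ ℓ + E ^ 2 * (b - a) * (a * b) ^ ℓ
          + (a - c) * (a * c) ^ ℓ < 0) := by
  have hab2 : 0 < a * b := mul_pos ha hb
  have hac2 : 0 < a * c := mul_pos ha hc
  have hbc2 : 0 < b * c := mul_pos hb hc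
  rcases eq_or_ne a c with hac | hac
  · subst hac
    refine aux_sign _ (E * (b - a) + E ^ 2 * (b - a)) (a * b) 0 (a * b / 2) 0 (a * b / 2)
      hab2 (by linarith) (by linarith) (by linarith) (by linarith) ?_ (fun ℓ => by ring)
    have hba : b - a ≠ 0 := sub_ne_zero.2 hbc
    have hrw : E * (b - a) + E ^ 2 * (b - a) = (b - a) * (E * (1 + E)) := by ring
    rw [hrw]
    exact mul_ne_zero hba (mul_ne_zero hE0 (fun hcon => hEm1 (by linarith)))
  · rcases eq_or_ne a b with hab | hab
    · subst hab
      refine aux_sign _ (E * (a - c) + (a - c)) (a * c) 0 (a * c / 2) 0 (a * c / 2)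
        hac2 (by linarith) (by linarith) (by linarith) (by linarith) ?_ (fun ℓ => by ring)
      have hca : a - c ≠ 0 := sub_ne_zero.2 hbc
      have hrw : E * (a - c) + (a - c) = (a - c) * (E + 1) := by ring
      rw [hrw]
      exact mul_ne_zero hca (fun hcon => hEm1 (by linarith))
    · have hE2 : E ^ 2 ≠ 0 := pow_ne_zero 2 hE0
      rcases hab.lt_or_gt with h1 | h1
      · rcases hac.lt_or_gt with h2 | h2
        · -- a smallest
          exact aux_sign _ (E * (b - c)) (b * c) (E ^ 2 * (b - a)) (a * b) (a - c) (a * c)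
            hbc2 hab2 hac2 (by nlinarith) (by nlinarith)
            (mul_ne_zero hE0 (sub_ne_zero.2 hbc)) (fun ℓ => by ring)
        · -- c < a < b : c smallest
          exact aux_sign _ (E ^ 2 * (b - a)) (a * b) (E * (b - c)) (b * c) (a - c) (a * c)
            hab2 hbc2 hac2 (by nlinarith) (by nlinarith)
            (mul_ne_zero hE2 (sub_ne_zero.2 (ne_of_lt h1).symm)) (fun ℓ => by ring)
      · rcases hac.lt_or_gt with h2 | h2
        · -- b < a < c : b smallest
          exact aux_sign _ (a - c) (a * c) (E * (b - c)) (b * c) (E ^ 2 * (b - a)) (a * b)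
            hac2 hbc2 hab2 (by nlinarith) (by nlinarith)
            (sub_ne_zero.2 hac) (fun ℓ => by ring)
        · rcases hbc.lt_or_gt with h3 | h3
          · -- b < c < a : b smallest
            exact aux_sign _ (a - c) (a * c) (E * (b - c)) (b * c) (E ^ 2 * (b - a)) (a * b)
              hac2 hbc2 hab2 (by nlinarith) (by nlinarith)
              (sub_ne_zero.2 hac) (fun ℓ => by ring)
          · -- c < b < a : c smallest
            exact aux_sign _ (E ^ 2 * (b - a)) (a * b) (E * (b - c)) (b * c) (a - c) (a * c)
              hab2 hbc2 hac2 (by nlinarith) (by nlinarith)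
              (mul_ne_zero hE2 (sub_ne_zero.2 (ne_of_lt h1))) (fun ℓ => by ring)

theorem growth_lemma (e : ℚ) (he : e ≠ -1 ∧ e ≠ 0 ∧ e ≠ 1)
    (a b c : ℝ) (ha : 0 < a) (hb : 0 < b) (hc : 0 < c) (hbc : b ≠ c) :
    ∃ c₁ : ℕ,
      (∀ m n : ℕ, c₁ ≤ m → m < n →
          ((e : ℝ) * b ^ m + a ^ m) / (c ^ m + (e : ℝ) * a ^ m) <
            ((e : ℝ) * b ^ n + a ^ n) / (c ^ n + (e : ℝ) * a ^ n)) ∨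
      (∀ m n : ℕ, c₁ ≤ m → m < n →
          ((e : ℝ) * b ^ n + a ^ n) / (c ^ n + (e : ℝ) * a ^ n) <
            ((e : ℝ) * b ^ m + a ^ m) / (c ^ m + (e : ℝ) * a ^ m)) := by
  have hE0 : (e : ℝ) ≠ 0 := by exact_mod_cast he.2.1
  have hEm1 : (e : ℝ) ≠ -1 := by
    intro h; exact he.1 (by exact_mod_cast h)
  obtain ⟨N₁, hd⟩ := growth_den_sign (e : ℝ) a c ha hc hE0 hEm1
  obtain ⟨N₂, hG⟩ := growth_num_sign (e : ℝ) a b c ha hb hc hbc hE0 hEm1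
  have hdne : ∀ ℓ, N₁ ≤ ℓ → c ^ ℓ + (e : ℝ) * a ^ ℓ ≠ 0 := by
    rcases hd with h | h
    · exact fun ℓ hℓ => ne_of_gt (h ℓ hℓ)
    · exact fun ℓ hℓ => ne_of_lt (h ℓ hℓ)
  have hdd : ∀ ℓ, N₁ ≤ ℓ →
      0 < (c ^ (ℓ + 1) + (e : ℝ) * a ^ (ℓ + 1)) * (c ^ ℓ + (e : ℝ) * a ^ ℓ) := by
    rcases hd with h | h
    · exact fun ℓ hℓ => mul_pos (h (ℓ + 1) (by omega)) (h ℓ hℓ)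
    · exact fun ℓ hℓ => mul_pos_of_neg_of_neg (h (ℓ + 1) (by omega)) (h ℓ hℓ)
  have hdiff : ∀ ℓ, N₁ ≤ ℓ →
      ((e : ℝ) * b ^ (ℓ + 1) + a ^ (ℓ + 1)) / (c ^ (ℓ + 1) + (e : ℝ) * a ^ (ℓ + 1)) -
        ((e : ℝ) * b ^ ℓ + a ^ ℓ) / (c ^ ℓ + (e : ℝ) * a ^ ℓ) =
      ((e : ℝ) * (b - c) * (b * c) ^ ℓ + (e : ℝ) ^ 2 * (b - a) * (a * b) ^ ℓ
          + (a - c) * (a * c) ^ ℓ) /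
        ((c ^ (ℓ + 1) + (e : ℝ) * a ^ (ℓ + 1)) * (c ^ ℓ + (e : ℝ) * a ^ ℓ)) := by
    intro ℓ hℓ
    rw [div_sub_div _ _ (hdne (ℓ + 1) (by omega)) (hdne ℓ hℓ)]
    congr 1
    ring
  refine ⟨max N₁ N₂, ?_⟩
  rcases hG with hpos | hneg
  · left
    have hstep : ∀ ℓ, max N₁ N₂ ≤ ℓ →
        ((e : ℝ) * b ^ ℓ + a ^ ℓ) / (c ^ ℓ + (e : ℝ) * a ^ ℓ) <
          ((e : ℝ) * b ^ (ℓ + 1) + a ^ (ℓ + 1)) / (c ^ (ℓ + 1) + (e : ℝ) * a ^ (ℓ + 1)) := by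
      intro ℓ hℓ
      have h1 := hdiff ℓ (le_trans (le_max_left _ _) hℓ)
      have h2 := div_pos (hpos ℓ (le_trans (le_max_right _ _) hℓ))
        (hdd ℓ (le_trans (le_max_left _ _) hℓ))
      linarith [h1 ▸ h2]
    exact chain (f := fun ℓ => ((e : ℝ) * b ^ ℓ + a ^ ℓ) / (c ^ ℓ + (e : ℝ) * a ^ ℓ)) hstep
  · right
    have hstep : ∀ ℓ, max N₁ N₂ ≤ ℓ →
        (fun ℓ => -(((e : ℝ) * b ^ ℓ + a ^ ℓ) / (c ^ ℓ + (e : ℝ) * a ^ ℓ))) ℓ <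
          (fun ℓ => -(((e : ℝ) * b ^ ℓ + a ^ ℓ) / (c ^ ℓ + (e : ℝ) * a ^ ℓ))) (ℓ + 1) := by
      intro ℓ hℓ
      have h1 := hdiff ℓ (le_trans (le_max_left _ _) hℓ)
      have h2 := div_neg_of_neg_of_pos (hneg ℓ (le_trans (le_max_right _ _) hℓ))
        (hdd ℓ (le_trans (le_max_left _ _) hℓ))
      simp only
      linarith [h1 ▸ h2]
    intro m n hm hmn
    have := chain hstep m n hm hmn
    linarith
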